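/- Let 𝒳, 𝒵 be compact subsets of ℝ, let a, b : 𝒵 → ℝ be measurable with E[a(Z)^k b(Z)^{i−k}] finite for all relevant i, k, and consider the observation map h(x,z) = a(z)x + b(z). Then the operator S(g)(x) = ∫ g(h(x,z)) Q(dz) maps polynomials of degree n to polynomials of degree at most n, and the linear map on coefficient vectors is upper triangular with diagonal entries E[a(Z)^k], k = 0,…,n. Consequently, if E[a(Z)^k] ≠ 0 for all k ≤ n, then every polynomial f of degree n equals S(g) for some polynomial g of degree n. -/
import Mathlib


open MeasureTheory

/-- For the affine observation channel `h(x,z) = a(z)x + b(z)` with noise law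
`Q` having all required moments, the operator `S(g)(x) = ∫ g(h(x,z)) Q(dz)` maps polynomials of
degree ≤ n to polynomials of degree ≤ n; on coefficients it acts by an upper triangular matrix
with entries `N(j,i) = C(j,i) E[a(Z)^i b(Z)^{j-i}]` (diagonal entries `E[a(Z)^i]`).
Consequently, if `E[a(Z)^k] ≠ 0` for all `k ≤ n`, every polynomial `f` of degree ≤ n equals
`S(g)` for some polynomial `g` of degree ≤ n. -/
theorem affine_channel_polynomial_observability
    {𝒵 : Type*} [MeasurableSpace 𝒵] (Q : Measure 𝒵) [IsProbabilityMeasure Q]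
    (a b : 𝒵 → ℝ) (ha : Measurable a) (hb : Measurable b)
    (hint : ∀ k m : ℕ, Integrable (fun z => a z ^ k * b z ^ m) Q)
    (n : ℕ) :
    (∀ g : Polynomial ℝ, g.natDegree ≤ n →
      ∃ p : Polynomial ℝ, p.natDegree ≤ n ∧
        (∀ x : ℝ, (∫ z, g.eval (a z * x + b z) ∂Q) = p.eval x) ∧
        (∀ i : ℕ, p.coeff i =
          ∑ j ∈ Finset.range (n + 1),
            (if i ≤ j then (j.choose i : ℝ) * ∫ z, a z ^ i * b z ^ (j - i) ∂Q else 0)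
              * g.coeff j)) ∧
    ((∀ k ≤ n, (∫ z, a z ^ k ∂Q) ≠ 0) →
      ∀ f : Polynomial ℝ, f.natDegree ≤ n →
        ∃ g : Polynomial ℝ, g.natDegree ≤ n ∧
          ∀ x : ℝ, f.eval x = ∫ z, g.eval (a z * x + b z) ∂Q) := by
  classical
  have key : ∀ g : Polynomial ℝ, g.natDegree ≤ n →
      ∃ p : Polynomial ℝ, p.natDegree ≤ n ∧
        (∀ x : ℝ, (∫ z, g.eval (a z * x + b z) ∂Q) = p.eval x) ∧
        (∀ i : ℕ, p.coeff i =
          ∑ j ∈ Finset.range (n + 1),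
            (if i ≤ j then (j.choose i : ℝ) * ∫ z, a z ^ i * b z ^ (j - i) ∂Q else 0)
              * g.coeff j) := by
    intro g hg
    set c : ℕ → ℝ := fun i => ∑ j ∈ Finset.range (n + 1),
        (if i ≤ j then (j.choose i : ℝ) * ∫ z, a z ^ i * b z ^ (j - i) ∂Q else 0)
          * g.coeff j with hc
    refine ⟨∑ i ∈ Finset.range (n + 1), Polynomial.C (c i) * Polynomial.X ^ i, ?_, ?_, ?_⟩
    · apply Polynomial.natDegree_sum_le_of_forall_le
      intro i hi
      exact le_trans (le_trans (Polynomial.natDegree_C_mul_le _ _)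
        (Polynomial.natDegree_X_pow_le i)) (Nat.lt_succ_iff.mp (Finset.mem_range.mp hi))
    · intro x
      have hexp : ∀ z, g.eval (a z * x + b z)
          = ∑ j ∈ Finset.range (n + 1), ∑ k ∈ Finset.range (n + 1),
              (if k ≤ j then g.coeff j * (j.choose k : ℝ) * x ^ k else 0)
                * (a z ^ k * b z ^ (j - k)) := by
        intro z
        rw [Polynomial.eval_eq_sum_range' (Nat.lt_succ_of_le hg)]
        refine Finset.sum_congr rfl fun j hj => ?_
        have hjn : j ≤ n := Nat.lt_succ_iff.mp (Finset.mem_range.mp hj)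
        rw [add_pow, Finset.mul_sum,
          ← Finset.sum_subset (Finset.range_subset_range.mpr (Nat.succ_le_succ hjn))
            (fun k _ hk => by
              rw [if_neg (by simp only [Finset.mem_range] at hk; omega), zero_mul])]
        refine Finset.sum_congr rfl fun k hk => ?_
        rw [if_pos (Nat.lt_succ_iff.mp (Finset.mem_range.mp hk))]
        ring
      have hInt : ∀ j k : ℕ, Integrable (fun z =>
          (if k ≤ j then g.coeff j * (j.choose k : ℝ) * x ^ k else 0)
            * (a z ^ k * b z ^ (j - k))) Q := fun j k => (hint k (j - k)).const_mul _
      have h1 : (∫ z, g.eval (a z * x + b z) ∂Q)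
          = ∫ z, ∑ j ∈ Finset.range (n + 1), ∑ k ∈ Finset.range (n + 1),
              (if k ≤ j then g.coeff j * (j.choose k : ℝ) * x ^ k else 0)
                * (a z ^ k * b z ^ (j - k)) ∂Q := by simp_rw [hexp]
      have h2 : (∫ z, ∑ j ∈ Finset.range (n + 1), ∑ k ∈ Finset.range (n + 1),
              (if k ≤ j then g.coeff j * (j.choose k : ℝ) * x ^ k else 0)
                * (a z ^ k * b z ^ (j - k)) ∂Q)
          = ∑ j ∈ Finset.range (n + 1), ∑ k ∈ Finset.range (n + 1),
              (if k ≤ j then g.coeff j * (j.choose k : ℝ) * x ^ k else 0)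
                * ∫ z, a z ^ k * b z ^ (j - k) ∂Q := by
        rw [integral_finset_sum _ fun j _ => integrable_finset_sum _ fun k _ => hInt j k]
        refine Finset.sum_congr rfl fun j _ => ?_
        rw [integral_finset_sum _ fun k _ => hInt j k]
        exact Finset.sum_congr rfl fun k _ => integral_const_mul _ _
      have h3 : (∑ j ∈ Finset.range (n + 1), ∑ k ∈ Finset.range (n + 1),
              (if k ≤ j then g.coeff j * (j.choose k : ℝ) * x ^ k else 0)
                * ∫ z, a z ^ k * b z ^ (j - k) ∂Q)
          = (∑ i ∈ Finset.range (n + 1), Polynomial.C (c i) * Polynomial.X ^ i).eval x := by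
        rw [Finset.sum_comm]
        simp only [Polynomial.eval_finset_sum, Polynomial.eval_mul, Polynomial.eval_C,
          Polynomial.eval_pow, Polynomial.eval_X, hc]
        refine Finset.sum_congr rfl fun i _ => ?_
        rw [Finset.sum_mul]
        refine Finset.sum_congr rfl fun j _ => ?_
        split_ifs with h
        · ring
        · simp
      exact h1.trans (h2.trans h3)
    · intro i
      rw [Polynomial.finset_sum_coeff]
      simp only [Polynomial.coeff_C_mul, Polynomial.coeff_X_pow, mul_ite, mul_one, mul_zero]
      rw [Finset.sum_ite_eq (Finset.range (n + 1)) i c]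
      by_cases hi : i ∈ Finset.range (n + 1)
      · rw [if_pos hi]
      · rw [if_neg hi]
        symm
        refine Finset.sum_eq_zero fun j hj => ?_
        rw [if_neg (by simp only [Finset.mem_range] at hi hj; omega), zero_mul]
  refine ⟨key, ?_⟩
  intro hk f hf
  set Mat : Matrix (Fin (n + 1)) (Fin (n + 1)) ℝ := fun i j =>
    if (i : ℕ) ≤ (j : ℕ) then ((j : ℕ).choose i : ℝ) * ∫ z, a z ^ (i : ℕ) * b z ^ ((j : ℕ) - i) ∂Q
    else 0 with hMat
  have hdiag : ∀ i : Fin (n + 1), Mat i i = ∫ z, a z ^ (i : ℕ) ∂Q := by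
    intro i
    simp [hMat]
  have hdet : Mat.det ≠ 0 := by
    rw [Matrix.det_of_upperTriangular (by
      intro i j hij
      simp only [hMat]
      rw [if_neg (by simpa using hij.not_ge)])]
    refine Finset.prod_ne_zero_iff.mpr fun i _ => ?_
    rw [hdiag]
    exact hk i (Nat.lt_succ_iff.mp i.isLt)
  have hInv : Mat * Mat⁻¹ = 1 := Matrix.mul_nonsing_inv _ (isUnit_iff_ne_zero.mpr hdet)
  set v : Fin (n + 1) → ℝ := fun i => f.coeff i with hv
  set cv : Fin (n + 1) → ℝ := Matrix.mulVec Mat⁻¹ v with hcv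
  have hMc : Matrix.mulVec Mat cv = v := by
    rw [hcv, Matrix.mulVec_mulVec, hInv, Matrix.one_mulVec]
  set g : Polynomial ℝ := ∑ i : Fin (n + 1), Polynomial.C (cv i) * Polynomial.X ^ (i : ℕ)
    with hgdef
  have hgdeg : g.natDegree ≤ n := by
    apply Polynomial.natDegree_sum_le_of_forall_le
    intro i _
    exact le_trans (le_trans (Polynomial.natDegree_C_mul_le _ _)
      (Polynomial.natDegree_X_pow_le _)) (Nat.lt_succ_iff.mp i.isLt)
  have hgcoeff : ∀ i : Fin (n + 1), g.coeff (i : ℕ) = cv i := by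
    intro i
    rw [hgdef, Polynomial.finset_sum_coeff]
    simp [Polynomial.coeff_C_mul, Polynomial.coeff_X_pow, Fin.val_inj, Finset.sum_ite_eq]
  obtain ⟨p, hpdeg, hpeval, hpcoeff⟩ := key g hgdeg
  have hpf : p = f := by
    ext i
    by_cases hi : i ≤ n
    · rw [hpcoeff i]
      have hi' : i < n + 1 := Nat.lt_succ_of_le hi
      have := congrFun hMc ⟨i, hi'⟩
      rw [Matrix.mulVec, dotProduct] at this
      calc ∑ j ∈ Finset.range (n + 1),
            (if i ≤ j then (j.choose i : ℝ) * ∫ z, a z ^ i * b z ^ (j - i) ∂Q else 0)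
              * g.coeff j
          = ∑ j : Fin (n + 1), Mat ⟨i, hi'⟩ j * cv j := by
            rw [← Fin.sum_univ_eq_sum_range (fun j =>
              (if i ≤ j then (j.choose i : ℝ) * ∫ z, a z ^ i * b z ^ (j - i) ∂Q else 0)
                * g.coeff j) (n + 1)]
            exact Finset.sum_congr rfl fun j _ => by rw [hgcoeff j]
        _ = f.coeff i := this
    · rw [hpcoeff i, Polynomial.coeff_eq_zero_of_natDegree_lt (lt_of_le_of_lt hf (by omega))]
      refine Finset.sum_eq_zero fun j hj => ?_
      rw [if_neg (by simp only [Finset.mem_range] at hj; omega), zero_mul]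
  exact ⟨g, hgdeg, fun x => by rw [← hpf]; exact (hpeval x).symm⟩
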